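/- For a connected graph G on n vertices with diameter d, the pebbling number satisfies π(G) ≤ (2^d - 1)·n + 1. -/

import Mathlib

variable {V : Type*} [DecidableEq V]

/-- Result of a pebbling move `u → v`: remove two pebbles from `u`, add one to `v`. -/
def applyMove (p : V → ℕ) (u v : V) (x : V) : ℕ :=
  (if x = u then p x - 2 else p x) + (if x = v then 1 else 0)

/-- A list of moves is a valid sequence of pebbling moves from `p` in `G`. -/
def IsValidSeq (G : SimpleGraph V) : (V → ℕ) → List (V × V) → Prop
  | _, [] => True
  | p, m :: rest => G.Adj m.1 m.2 ∧ 2 ≤ p m.1 ∧ IsValidSeq G (applyMove p m.1 m.2) rest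

/-- The distribution after executing a sequence of pebbling moves. -/
def applySeq (p : V → ℕ) : List (V × V) → V → ℕ
  | [] => p
  | m :: rest => applySeq (applyMove p m.1 m.2) rest

/-- Indegree of a vertex in a directed multigraph (multiset of directed edges). -/
def indeg (D : Multiset (V × V)) (v : V) : ℕ :=
  Multiset.card (D.filter fun e => e.2 = v)

/-- Outdegree of a vertex in a directed multigraph. -/
def outdeg (D : Multiset (V × V)) (v : V) : ℕ :=
  Multiset.card (D.filter fun e => e.1 = v)

/-- balance(D,p,v) = p(v) + indeg_D(v) - 2·outdeg_D(v). -/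
def balance (D : Multiset (V × V)) (p : V → ℕ) (v : V) : ℤ :=
  (p v : ℤ) + (indeg D v : ℤ) - 2 * (outdeg D v : ℤ)

/-- `D` is orderable under `p`: some ordering of the edge multiset of `D`
is a valid sequence of pebbling moves. -/
def Orderable (G : SimpleGraph V) (D : Multiset (V × V)) (p : V → ℕ) : Prop :=
  ∃ σ : List (V × V), (σ : Multiset (V × V)) = D ∧ IsValidSeq G p σ

/-- A directed multigraph is acyclic if its edge relation admits no directed cycle. -/
def DAcyclic (D : Multiset (V × V)) : Prop :=
  ∀ v : V, ¬ Relation.TransGen (fun a b => (a, b) ∈ D) v v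

/-- The strongly connected component of `a` in the directed multigraph `D`. -/
def SCC (D : Multiset (V × V)) (a : V) : Set V :=
  {b | Relation.ReflTransGen (fun x y => (x, y) ∈ D) a b ∧
       Relation.ReflTransGen (fun x y => (x, y) ∈ D) b a}

lemma applySeq_append (a b : List (V × V)) : ∀ p : V → ℕ,
    applySeq p (a ++ b) = applySeq (applySeq p a) b := by
  induction a with
  | nil => intro p; rfl
  | cons m rest ih => intro p; simp [applySeq, ih]

lemma isValidSeq_append {G : SimpleGraph V} (a b : List (V × V)) : ∀ p : V → ℕ,
    IsValidSeq G p a → IsValidSeq G (applySeq p a) b → IsValidSeq G p (a ++ b) := by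
  induction a with
  | nil => intro p _ h; exact h
  | cons m rest ih =>
    intro p ha hb
    obtain ⟨h1, h2, h3⟩ := ha
    exact ⟨h1, h2, ih _ h3 hb⟩

lemma applySeq_replicate (v u : V) (hne : u ≠ v) : ∀ (m : ℕ) (p : V → ℕ),
    applySeq p (List.replicate m (v, u)) =
      fun x => if x = v then p v - 2 * m else if x = u then p u + m else p x := by
  intro m
  induction m with
  | zero =>
    intro p; funext x; simp only [applySeq, Nat.mul_zero, Nat.sub_zero, Nat.add_zero]
    by_cases h1 : x = v <;> by_cases h2 : x = u <;> simp [h1, h2, hne] <;> rfl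
  | succ m ih =>
    intro p
    rw [List.replicate_succ]
    show applySeq (applyMove p v u) _ = _
    rw [ih]
    funext x
    simp only [applyMove]
    split
    · next h => subst h; simp [hne, Ne.symm hne]; omega
    · split
      · next h1 h2 => subst h2; simp [hne]; omega
      · next h1 h2 => simp [h1, h2]

lemma isValidSeq_replicate {G : SimpleGraph V} {v u : V} (hadj : G.Adj v u) :
    ∀ (m : ℕ) (p : V → ℕ), 2 * m ≤ p v → IsValidSeq G p (List.replicate m (v, u)) := by
  intro m
  induction m with
  | zero => intro p _; trivial
  | succ m ih =>
    intro p hpv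
    rw [List.replicate_succ]
    refine ⟨hadj, (by omega : 2 ≤ p v), ih _ ?_⟩
    show 2 * m ≤ applyMove p v u v
    simp [applyMove, hadj.ne', hadj.ne]
    omega

lemma reach_of_walk {G : SimpleGraph V} {r : V} :
    ∀ {v : V} (w : G.Walk v r) (p : V → ℕ), 2 ^ w.length ≤ p v →
      ∃ σ : List (V × V), IsValidSeq G p σ ∧ 1 ≤ applySeq p σ r := by
  intro v w
  induction w with
  | nil => intro p hpv; exact ⟨[], trivial, show 1 ≤ p _ by simpa using hpv⟩
  | @cons v u r h q ih =>
    intro p hpv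
    set m := 2 ^ q.length with hm
    have hlen : (SimpleGraph.Walk.cons h q).length = q.length + 1 := rfl
    rw [hlen, pow_succ] at hpv
    have hval := isValidSeq_replicate h m p (by omega)
    have happ := applySeq_replicate v u h.ne' m p
    have hpu : m ≤ applySeq p (List.replicate m (v, u)) u := by
      rw [happ]; simp [h.ne']
    obtain ⟨σ', hσ'val, hσ'r⟩ := ih _ hpu
    refine ⟨List.replicate m (v, u) ++ σ', ?_, ?_⟩
    · exact isValidSeq_append _ _ _ hval hσ'val
    · rw [applySeq_append]; exact hσ'r

/-- For a connected graph on `n` vertices with diameter `d`, `π(G) ≤ (2^d - 1)·n + 1`: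
under every distribution of `(2^d - 1)·n + 1` pebbles, every vertex is reachable. -/
theorem pebbling_number_upper_bound [Fintype V] (G : SimpleGraph V) (hG : G.Connected)
    (d : ℕ) (hd : ∀ u v : V, G.dist u v ≤ d)
    (p : V → ℕ) (hp : ∑ v : V, p v = (2 ^ d - 1) * Fintype.card V + 1) (r : V) :
    ∃ σ : List (V × V), IsValidSeq G p σ ∧ 1 ≤ applySeq p σ r := by
  have h2d : 1 ≤ 2 ^ d := Nat.one_le_two_pow
  have hv : ∃ v : V, 2 ^ d ≤ p v := by
    by_contra hc
    push_neg at hc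
    have hle : ∑ v : V, p v ≤ ∑ _v : V, (2 ^ d - 1) :=
      Finset.sum_le_sum fun v _ => by have := hc v; omega
    rw [hp, Finset.sum_const, Finset.card_univ, smul_eq_mul, mul_comm] at hle
    omega
  obtain ⟨v, hv⟩ := hv
  obtain ⟨w, hw⟩ := (hG.preconnected v r).exists_walk_length_eq_dist
  refine reach_of_walk w p ?_
  rw [hw]
  calc 2 ^ G.dist v r ≤ 2 ^ d := Nat.pow_le_pow_right (by norm_num) (hd v r)
    _ ≤ p v := hv
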